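/- For every L of the form L = n² with n ∈ ℕ, the non-uniform partition function satisfies Z^nu_{L,β} ≥ (e^β/2)^L · (2/(3e^{2β}))^{√L}, and the uniform partition function satisfies Z^u_{L,β} ≥ e^{β(L−2√L)} / |W_L|. -/

import Mathlib

open scoped Classical
open Filter

noncomputable section

/-- The three allowed steps: east `(1,0)`, north `(0,1)`, south `(0,-1)`. -/
def stepVec : Fin 3 → ℤ × ℤ := ![(1, 0), (0, 1), (0, -1)]

/-- Position of the partially directed walk after `k` steps,
for a configuration `s` of `L` steps. -/
def pathPos (L : ℕ) (s : Fin L → Fin 3) (k : ℕ) : ℤ × ℤ :=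
  ∑ i : Fin L, if (i : ℕ) < k then stepVec (s i) else 0

/-- `s` encodes a path of `W_L` : it is self-avoiding (all visited sites are
distinct) and its last step is horizontal (step index `0`, i.e. `(1,0)`). -/
def IsPath (L : ℕ) (s : Fin L → Fin 3) : Prop :=
  (∀ j k : ℕ, j ≤ L → k ≤ L → pathPos L s j = pathPos L s k → j = k) ∧
  (∀ hL : 0 < L, s ⟨L - 1, by omega⟩ = 0)

/-- Two lattice sites are adjacent (at euclidean distance 1). -/
def adjacent (p q : ℤ × ℤ) : Prop := |p.1 - q.1| + |p.2 - q.2| = 1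

/-- Number of self-touchings: pairs `(i,j)` with `i < j - 1`, `j ≤ L`,
`‖w_i - w_j‖ = 1`. -/
def numTouch (L : ℕ) (s : Fin L → Fin 3) : ℕ :=
  ((Finset.range (L + 1) ×ˢ Finset.range (L + 1)).filter
    (fun ij => ij.1 + 1 < ij.2 ∧ adjacent (pathPos L s ij.1) (pathPos L s ij.2))).card

/-- The set `W_L` of valid `L`-step configurations. -/
def WL (L : ℕ) : Finset (Fin L → Fin 3) := Finset.univ.filter (IsPath L)

/-- Non-uniform weight of a configuration: each step taken at the origin or
after a horizontal step has weight `1/3`, each step after a vertical step has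
weight `1/2`. -/
def nuWeight (L : ℕ) (s : Fin L → Fin 3) : ℝ :=
  ∏ i : Fin L,
    if (i : ℕ) = 0 then (1 / 3 : ℝ)
    else if s ⟨(i : ℕ) - 1, by have := i.isLt; omega⟩ = 0 then 1 / 3 else 1 / 2

/-- The two models: uniform and non-uniform. -/
inductive Model | u | nu

/-- The law `P^m_L` on `W_L`. -/
def pweight : Model → (L : ℕ) → (Fin L → Fin 3) → ℝ
  | Model.u, L, _ => 1 / ((WL L).card : ℝ)
  | Model.nu, L, s => nuWeight L s

/-- The partition function `Z^m_{L,β} = Σ_{w ∈ W_L} e^{H_{L,β}(w)} P^m_L(w)`,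
with Hamiltonian `H_{L,β}(w) = β · (number of self-touchings)`. -/
def Z (m : Model) (L : ℕ) (β : ℝ) : ℝ :=
  ∑ s ∈ WL L, Real.exp (β * (numTouch L s : ℝ)) * pweight m L s

/-- The normalizing constant `c_β = (1+e^{-β/2})/(1-e^{-β/2})`. -/
def cbeta (β : ℝ) : ℝ := (1 + Real.exp (-β / 2)) / (1 - Real.exp (-β / 2))

/-- The geometric increment law `P_β(v = k) = e^{-(β/2)|k|}/c_β`. -/
def incP (β : ℝ) (k : ℤ) : ℝ := Real.exp (-(β / 2) * |(k : ℝ)|) / cbeta β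

/-- Position `V_j` of the random walk built from increments `v`. -/
def Vpos (n : ℕ) (v : Fin n → ℤ) (j : ℕ) : ℤ :=
  ∑ i : Fin n, if (i : ℕ) < j then v i else 0

/-- The area `A_n = Σ_{j=1}^n |V_j|`. -/
def areaA (n : ℕ) (v : Fin n → ℤ) : ℤ := ∑ j ∈ Finset.Icc 1 n, |Vpos n v j|

/-- Probability under `P_β` of an event `E` depending on the first `n`
increments of the random walk. -/
def wProb (β : ℝ) (n : ℕ) (E : (Fin n → ℤ) → Prop) : ℝ :=
  ∑' v : Fin n → ℤ, if E v then ∏ i : Fin n, incP β (v i) else 0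

/-- `P_β(V_{n,k})`: the walk returns to `0` at time `n` with area `A_n = k`. -/
def PV (β : ℝ) (n k : ℕ) : ℝ :=
  wProb β n fun v => Vpos n v n = 0 ∧ areaA n v = (k : ℤ)

/-- `P_β(V_{n,q})` for rational prescribed area `q`. -/
def PVq (β : ℝ) (n : ℕ) (q : ℚ) : ℝ :=
  wProb β n fun v => Vpos n v n = 0 ∧ (areaA n v : ℚ) = q

/-- `P_β(A_n ≤ α n, V_n = 0)`. -/
def Ple (β : ℝ) (n : ℕ) (α : ℝ) : ℝ :=
  wProb β n fun v => (areaA n v : ℝ) ≤ α * n ∧ Vpos n v n = 0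

/-- `P_β(A_n ≤ α n)`. -/
def PleA (β : ℝ) (n : ℕ) (α : ℝ) : ℝ :=
  wProb β n fun v => (areaA n v : ℝ) ≤ α * n

/-- `P_β(max_{1 ≤ j ≤ n} |V_j| ≤ α)`. -/
def Pmax (β : ℝ) (n : ℕ) (α : ℝ) : ℝ :=
  wProb β n fun v => ∀ j ∈ Finset.Icc 1 n, (|Vpos n v j| : ℝ) ≤ α

/-- `n ∈ N_α`, i.e. `n ≥ 2` and `α n ∈ ℕ`. -/
def Nmem (α : ℚ) (n : ℕ) : Prop := 2 ≤ n ∧ ∃ m : ℕ, α * (n : ℚ) = (m : ℚ)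

/-- `g_β(α) = sup_{N ∈ N_α} (1/N) log P_β(V_{N, αN})` for rational `α ≥ 0`. -/
def gQ (β : ℝ) (α : ℚ) : ℝ :=
  sSup {x : ℝ | ∃ n : ℕ, Nmem α n ∧ x = Real.log (PVq β n (α * n)) / n}

/-- `Γ^u(β) = c_β/e^β`, `Γ^nu(β) = 2c_β/(3e^β)`. -/
def Gam : Model → ℝ → ℝ
  | Model.u, β => cbeta β / Real.exp β
  | Model.nu, β => 2 * cbeta β / (3 * Real.exp β)

/-- `φ^u_β = β - log(1+√2)`, `φ^nu_β = β - log 2`. -/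
def phim : Model → ℝ → ℝ
  | Model.u, β => β - Real.log (1 + Real.sqrt 2)
  | Model.nu, β => β - Real.log 2

end
noncomputable section

def zig (n : ℕ) : Fin (n^2) → Fin 3 := fun i =>
  if (i:ℕ) % n = n - 1 then 0 else if ((i:ℕ)/n) % 2 = 0 then 1 else 2

lemma divmod_div {n q r : ℕ} (h : r < n) : (q * n + r) / n = q := by
  rw [add_comm, mul_comm, Nat.add_mul_div_left _ _ (by omega : 0 < n),
    Nat.div_eq_of_lt h, zero_add]

lemma divmod_mod {n q r : ℕ} (h : r < n) : (q * n + r) % n = r := by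
  rw [add_comm, mul_comm, Nat.add_mul_mod_self_left, Nat.mod_eq_of_lt h]

lemma pathPos_zero (L : ℕ) (s : Fin L → Fin 3) : pathPos L s 0 = 0 := by
  simp [pathPos]

lemma pathPos_succ (L : ℕ) (s : Fin L → Fin 3) (k : ℕ) (hk : k < L) :
    pathPos L s (k+1) = pathPos L s k + stepVec (s ⟨k, hk⟩) := by
  have h : ∀ i : Fin L, (if (i:ℕ) < k+1 then stepVec (s i) else 0)
      = (if (i:ℕ) < k then stepVec (s i) else 0)
        + (if (i:ℕ) = k then stepVec (s i) else 0) := by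
    intro i
    by_cases h1 : (i:ℕ) < k
    · rw [if_pos (by omega), if_pos h1, if_neg (by omega), add_zero]
    · by_cases h2 : (i:ℕ) = k
      · rw [if_pos (by omega), if_neg h1, if_pos h2, zero_add]
      · rw [if_neg (by omega), if_neg h1, if_neg h2, add_zero]
  rw [pathPos, pathPos]
  rw [Finset.sum_congr rfl (fun i _ => h i), Finset.sum_add_distrib]
  congr 1
  rw [Finset.sum_eq_single (⟨k, hk⟩ : Fin L)]
  · simp
  · intro b _ hb
    rw [if_neg (by simpa [Fin.ext_iff] using hb)]
  · simp

def zpos (n k : ℕ) : ℤ × ℤ :=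
  ((k/n : ℕ), if (k/n) % 2 = 0 then ((k % n : ℕ) : ℤ) else (n : ℤ) - 1 - ((k % n : ℕ) : ℤ))

lemma zig_pos {n : ℕ} (hn : 1 ≤ n) : ∀ k, k ≤ n^2 → pathPos (n^2) (zig n) k = zpos n k := by
  intro k
  induction k with
  | zero => intro _; simp [zpos, pathPos_zero, Prod.ext_iff]
  | succ k ih =>
    intro hk1
    have hk : k < n^2 := by omega
    obtain ⟨q, r, hrn, hke⟩ : ∃ q r, r < n ∧ k = q*n + r :=
      ⟨k/n, k%n, Nat.mod_lt _ (by omega), by rw [mul_comm, Nat.div_add_mod]⟩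
    have hd0 : k / n = q := by rw [hke, divmod_div hrn]
    have hm0 : k % n = r := by rw [hke, divmod_mod hrn]
    rw [pathPos_succ _ _ k hk, ih (by omega), zpos, zpos, hd0, hm0]
    by_cases h1 : r = n - 1
    · have hz : zig n ⟨k, hk⟩ = 0 := by simp [zig, hm0, h1]
      have hk1e : k + 1 = (q+1) * n + 0 := by
        have : (q+1) * n = q*n + n := by ring
        omega
      have hd : (k+1) / n = q + 1 := by rw [hk1e, divmod_div (by omega)]
      have hm : (k+1) % n = 0 := by rw [hk1e, divmod_mod (by omega)]
      rw [hz, hd, hm]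
      simp only [stepVec]
      by_cases h2 : q % 2 = 0
      · rw [if_pos h2, if_neg (by omega : ¬ (q+1) % 2 = 0)]
        simp only [Matrix.cons_val_zero, Prod.mk_add_mk, Prod.ext_iff]
        constructor
        · push_cast; ring
        · subst h1; push_cast [Nat.cast_sub hn]; ring
      · rw [if_neg h2, if_pos (by omega : (q+1) % 2 = 0)]
        simp only [Matrix.cons_val_zero, Prod.mk_add_mk, Prod.ext_iff]
        constructor
        · push_cast; ring
        · subst h1; push_cast [Nat.cast_sub hn]; ring
    · have hrn1 : r + 1 < n := by omega
      have hz : zig n ⟨k, hk⟩ = if q % 2 = 0 then 1 else 2 := by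
        simp [zig, hm0, hd0, h1]
      have hk1e : k + 1 = q * n + (r+1) := by omega
      have hd : (k+1) / n = q := by rw [hk1e, divmod_div hrn1]
      have hm : (k+1) % n = r + 1 := by rw [hk1e, divmod_mod hrn1]
      rw [hz, hd, hm]
      by_cases h2 : q % 2 = 0
      · rw [if_pos h2]
        simp only [stepVec, if_pos h2, Matrix.cons_val_one, Matrix.head_cons,
          Prod.mk_add_mk, Prod.ext_iff]
        exact ⟨by rw [Prod.fst_add]; simp, by rw [Prod.snd_add]; push_cast; ring⟩
      · rw [if_neg h2]
        simp only [stepVec, if_neg h2, Matrix.cons_val_two, Matrix.tail_cons,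
          Matrix.head_cons, Prod.mk_add_mk, Prod.ext_iff]
        exact ⟨by ring, by push_cast; ring⟩


lemma zig_mem {n : ℕ} (hn : 1 ≤ n) : zig n ∈ WL (n^2) := by
  rw [WL, Finset.mem_filter]
  refine ⟨Finset.mem_univ _, ?_, ?_⟩
  · intro j k hj hk heq
    rw [zig_pos hn j hj, zig_pos hn k hk, zpos, zpos, Prod.mk.injEq] at heq
    obtain ⟨h1, h2⟩ := heq
    have hq : j / n = k / n := by exact_mod_cast h1
    have hr : j % n = k % n := by
      rw [hq] at h2
      by_cases hp : (k/n) % 2 = 0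
      · rw [if_pos hp, if_pos hp] at h2; exact_mod_cast h2
      · rw [if_neg hp, if_neg hp] at h2; omega
    have e1 : n * (j / n) + j % n = j := Nat.div_add_mod j n
    have e2 : n * (k / n) + k % n = k := Nat.div_add_mod k n
    rw [hq, hr] at e1
    omega
  · intro hL
    have hsq : n^2 = (n-1)*n + (n-1) + 1 := by
      obtain ⟨m, rfl⟩ : ∃ m, n = m + 1 := ⟨n - 1, by omega⟩
      simp only [Nat.add_sub_cancel]
      have h1 : (m+1)^2 = m*(m+1) + m + 1 := by ring
      omega
    have hmod : (n^2 - 1) % n = n - 1 := by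
      have : n^2 - 1 = (n-1)*n + (n-1) := by omega
      rw [this, divmod_mod (by omega)]
    simp [zig, hmod]

lemma zig_weight_factor {n : ℕ} (hn : 1 ≤ n) (i : Fin (n^2)) :
    (if (i : ℕ) = 0 then (1 / 3 : ℝ)
      else if zig n ⟨(i : ℕ) - 1, by have := i.isLt; omega⟩ = 0 then 1 / 3 else 1 / 2)
    = if (i : ℕ) % n = 0 then (1/3 : ℝ) else 1/2 := by
  by_cases h0 : (i : ℕ) = 0
  · rw [if_pos h0, if_pos (by simp [h0])]
  · rw [if_neg h0]
    have key : zig n ⟨(i : ℕ) - 1, by have := i.isLt; omega⟩ = 0 ↔ (i : ℕ) % n = 0 := by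
      have hz : zig n ⟨(i : ℕ) - 1, by have := i.isLt; omega⟩ = 0 ↔ ((i:ℕ)-1) % n = n - 1 := by
        unfold zig
        by_cases h : ((i:ℕ)-1) % n = n - 1 <;> simp [h]
        split <;> decide
      rw [hz]
      constructor
      · intro h
        obtain ⟨q, r, hrn, hke⟩ : ∃ q r, r < n ∧ (i:ℕ) - 1 = q*n + r :=
          ⟨((i:ℕ)-1)/n, ((i:ℕ)-1)%n, Nat.mod_lt _ (by omega), by rw [mul_comm, Nat.div_add_mod]⟩
        rw [hke, divmod_mod hrn] at h
        have : (i:ℕ) = (q+1) * n + 0 := by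
          have : (q+1)*n = q*n + n := by ring
          omega
        rw [this, divmod_mod (by omega)]
      · intro h
        have hd : (i:ℕ) / n * n = (i:ℕ) := Nat.div_mul_cancel (Nat.dvd_of_mod_eq_zero h)
        have ht : 1 ≤ (i:ℕ)/n := by
          rcases Nat.eq_zero_or_pos ((i:ℕ)/n) with h'|h'
          · rw [h'] at hd; omega
          · omega
        obtain ⟨u, hu⟩ : ∃ u, (i:ℕ)/n = u + 1 := ⟨(i:ℕ)/n - 1, by omega⟩
        have : (i:ℕ) - 1 = u * n + (n-1) := by
          rw [hu] at hd
          have : (u+1)*n = u*n + n := by ring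
          omega
        rw [this, divmod_mod (by omega)]
    by_cases h : (i : ℕ) % n = 0
    · rw [if_pos (key.mpr h), if_pos h]
    · rw [if_neg (fun hc => h (key.mp hc)), if_neg h]

lemma count_zero {n : ℕ} (hn : 1 ≤ n) :
    ((Finset.range (n^2)).filter (fun i => i % n = 0)).card = n := by
  have himg : ((Finset.range (n^2)).filter (fun i => i % n = 0))
      = (Finset.range n).image (fun q => q * n) := by
    ext i
    simp only [Finset.mem_filter, Finset.mem_range, Finset.mem_image]
    constructor
    · rintro ⟨hiL, hmod⟩
      refine ⟨i / n, ?_, Nat.div_mul_cancel (Nat.dvd_of_mod_eq_zero hmod)⟩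
      rw [Nat.div_lt_iff_lt_mul (by omega)]
      rw [← pow_two]; exact hiL
    · rintro ⟨q, hq, rfl⟩
      constructor
      · calc q * n < n * n := by
              exact Nat.mul_lt_mul_of_lt_of_le hq le_rfl (by omega)
            _ = n^2 := (pow_two n).symm
      · exact Nat.mul_mod_left q n
  rw [himg, Finset.card_image_of_injective _ (fun a b h => by
    exact Nat.eq_of_mul_eq_mul_right (by omega) h), Finset.card_range]

lemma nuWeight_zig {n : ℕ} (hn : 1 ≤ n) :
    nuWeight (n^2) (zig n) = (1/3 : ℝ)^n * (1/2 : ℝ)^(n^2 - n) := by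
  rw [nuWeight]
  rw [Finset.prod_congr rfl (fun i _ => zig_weight_factor hn i)]
  rw [Finset.prod_ite, Finset.prod_const, Finset.prod_const]
  have hc : (Finset.univ.filter (fun i : Fin (n^2) => (i:ℕ) % n = 0)).card = n := by
    rw [Finset.card_filter, Fin.sum_univ_eq_sum_range (fun i => if i % n = 0 then 1 else 0),
      ← Finset.card_filter]
    exact count_zero hn
  have hc2 : (Finset.univ.filter (fun i : Fin (n^2) => ¬ (i:ℕ) % n = 0)).card = n^2 - n := by
    have := Finset.card_filter_add_card_filter_not
      (s := (Finset.univ : Finset (Fin (n^2)))) (p := fun i => (i:ℕ) % n = 0)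
    rw [Finset.card_univ, Fintype.card_fin, hc] at this
    omega
  rw [hc, hc2]

lemma touch_lb {n : ℕ} (hn : 1 ≤ n) : (n-1)*(n-1) ≤ numTouch (n^2) (zig n) := by
  rw [numTouch]
  have h := Finset.card_le_card_of_injOn
    (f := fun bc : ℕ × ℕ => (bc.1 * n + bc.2, (bc.1+1) * n + (n-1-bc.2)))
    (s := Finset.range (n-1) ×ˢ Finset.range (n-1))
    (t := (Finset.range (n^2 + 1) ×ˢ Finset.range (n^2 + 1)).filter
      (fun ij => ij.1 + 1 < ij.2 ∧
        adjacent (pathPos (n^2) (zig n) ij.1) (pathPos (n^2) (zig n) ij.2)))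
    ?_ ?_
  · simpa using h
  · rintro ⟨b, c⟩ hbc
    simp only [Finset.mem_coe, Finset.mem_product, Finset.mem_range] at hbc
    obtain ⟨hb, hc⟩ := hbc
    obtain ⟨m, rfl⟩ : ∃ m, n = m + 2 := ⟨n - 2, by omega⟩
    have hb' : b ≤ m := by omega
    have hc' : c ≤ m := by omega
    have f1 : (b+1) * (m+2) = b*(m+2) + (m+2) := by ring
    have f2 : b * (m+2) ≤ m * (m+2) := Nat.mul_le_mul_right _ hb'
    have f3 : (m+2)^2 = m*(m+2) + 2*(m+2) := by ring
    have hiL : b * (m+2) + c ≤ (m+2)^2 := by omega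
    have hjL : (b+1) * (m+2) + (m+2-1-c) ≤ (m+2)^2 := by omega
    simp only [Finset.mem_coe, Finset.mem_filter, Finset.mem_product, Finset.mem_range]
    refine ⟨⟨by omega, by omega⟩, by omega, ?_⟩
    set n := m + 2 with hnm
    rw [zig_pos (by omega) _ hiL, zig_pos (by omega) _ hjL, zpos, zpos]
    have d1 : (b * n + c) / n = b := divmod_div (by omega)
    have m1 : (b * n + c) % n = c := divmod_mod (by omega)
    have d2 : ((b+1) * n + (n-1-c)) / n = b + 1 := divmod_div (by omega)
    have m2 : ((b+1) * n + (n-1-c)) % n = n-1-c := divmod_mod (by omega)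
    rw [d1, m1, d2, m2]
    have hcast : ((n - 1 - c : ℕ) : ℤ) = (n:ℤ) - 1 - (c:ℤ) := by omega
    unfold adjacent
    by_cases hp : b % 2 = 0
    · rw [if_pos hp, if_neg (by omega : ¬ (b+1) % 2 = 0)]
      simp only [hcast]
      rw [show (b:ℤ) - ((b:ℕ)+1 : ℕ) = -1 by push_cast; ring,
        show (c:ℤ) - ((n:ℤ) - 1 - ((n:ℤ) - 1 - (c:ℤ))) = 0 by ring]
      norm_num
    · rw [if_neg hp, if_pos (by omega : (b+1) % 2 = 0)]
      simp only [hcast]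
      rw [show (b:ℤ) - ((b:ℕ)+1 : ℕ) = -1 by push_cast; ring,
        show ((n:ℤ) - 1 - (c:ℤ)) - ((n:ℤ) - 1 - (c:ℤ)) = 0 by ring]
      norm_num
  · rintro ⟨b, c⟩ hbc ⟨b', c'⟩ hbc' heq
    simp only [Finset.mem_coe, Finset.mem_product, Finset.mem_range] at hbc hbc'
    simp only [Prod.mk.injEq] at heq
    obtain ⟨h1, _⟩ := heq
    have e1 : (b * n + c) / n = b := divmod_div (by omega)
    have e2 : (b * n + c) % n = c := divmod_mod (by omega)
    have e1' : (b' * n + c') / n = b' := divmod_div (by omega)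
    have e2' : (b' * n + c') % n = c' := divmod_mod (by omega)
    rw [h1] at e1 e2
    simp only [Prod.mk.injEq]
    omega

end
/-- For `L = n²`, `Z^nu_{L,β} ≥ (e^β/2)^L (2/(3e^{2β}))^{√L}` and
`Z^u_{L,β} ≥ e^{β(L - 2√L)}/|W_L|`. -/
theorem stmt3 (β : ℝ) (hβ : 0 < β) (n : ℕ) (hn : 1 ≤ n) :
    Z Model.nu (n ^ 2) β ≥
      (Real.exp β / 2) ^ (n ^ 2) * (2 / (3 * Real.exp (2 * β))) ^ n ∧
    Z Model.u (n ^ 2) β ≥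
      Real.exp (β * ((n : ℝ) ^ 2 - 2 * n)) / ((WL (n ^ 2)).card : ℝ) := by
  have hmem := zig_mem hn
  set T : ℕ := numTouch (n^2) (zig n) with hTdef
  have hT : ((n:ℝ)^2 - 2*n) ≤ (T : ℝ) := by
    have h1 := touch_lb hn
    have h2 : (((n-1)*(n-1) : ℕ) : ℝ) ≤ (T : ℝ) := by exact_mod_cast h1
    have h3 : (((n-1)*(n-1) : ℕ) : ℝ) = ((n:ℝ) - 1) * ((n:ℝ) - 1) := by
      push_cast [Nat.cast_sub hn]; ring
    nlinarith [h2, h3]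
  have hexp : Real.exp (β * ((n:ℝ)^2 - 2*n)) ≤ Real.exp (β * (T:ℝ)) :=
    Real.exp_le_exp.2 (mul_le_mul_of_nonneg_left hT hβ.le)
  constructor
  · -- non-uniform
    have hw : ∀ s, 0 ≤ nuWeight (n^2) s := by
      intro s
      apply Finset.prod_nonneg
      intro i _
      split_ifs <;> norm_num
    have hterm : Real.exp (β * (T:ℝ)) * pweight Model.nu (n^2) (zig n)
        ≤ Z Model.nu (n^2) β := by
      apply Finset.single_le_sum
        (f := fun s => Real.exp (β * (numTouch (n^2) s : ℝ)) * pweight Model.nu (n^2) s)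
        ?_ hmem
      intro s _
      exact mul_nonneg (Real.exp_nonneg _) (hw s)
    have hid : (Real.exp β / 2) ^ (n ^ 2) * (2 / (3 * Real.exp (2 * β))) ^ n
        = Real.exp (β * ((n:ℝ)^2 - 2*n)) * ((1/3:ℝ)^n * (1/2:ℝ)^(n^2 - n)) := by
      have e1 : Real.exp β ^ (n^2) = Real.exp (((n^2 : ℕ):ℝ) * β) :=
        (Real.exp_nat_mul β (n^2)).symm
      have e2 : Real.exp (2*β) ^ n = Real.exp (((n:ℕ):ℝ) * (2*β)) :=
        (Real.exp_nat_mul (2*β) n).symm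
      have h2n : (2:ℝ)^(n^2) = 2^(n^2 - n) * 2^n := by
        rw [← pow_add]
        congr 1
        have : n ≤ n^2 := Nat.le_self_pow (by omega) n
        omega
      rw [div_pow, div_pow, mul_pow, e1, e2,
        show ((n^2:ℕ):ℝ) * β = β*((n:ℝ)^2 - 2*n) + ((n:ℕ):ℝ)*(2*β) by push_cast; ring,
        Real.exp_add, h2n]
      have h3 : (0:ℝ) < Real.exp (((n:ℕ):ℝ)*(2*β)) := Real.exp_pos _
      field_simp
      simp only [one_div, inv_pow]
      field_simp
    rw [ge_iff_le, hid]
    calc Real.exp (β * ((n:ℝ)^2 - 2*n)) * ((1/3:ℝ)^n * (1/2:ℝ)^(n^2 - n))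
        ≤ Real.exp (β * (T:ℝ)) * ((1/3:ℝ)^n * (1/2:ℝ)^(n^2 - n)) := by
          apply mul_le_mul_of_nonneg_right hexp
          positivity
      _ = Real.exp (β * (T:ℝ)) * pweight Model.nu (n^2) (zig n) := by
          rw [show pweight Model.nu (n^2) (zig n) = nuWeight (n^2) (zig n) from rfl,
            nuWeight_zig hn]
      _ ≤ Z Model.nu (n^2) β := hterm
  · -- uniform
    have hterm : Real.exp (β * (T:ℝ)) * pweight Model.u (n^2) (zig n)
        ≤ Z Model.u (n^2) β := by
      apply Finset.single_le_sum
        (f := fun s => Real.exp (β * (numTouch (n^2) s : ℝ)) * pweight Model.u (n^2) s)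
        ?_ hmem
      intro s _
      apply mul_nonneg (Real.exp_nonneg _)
      show (0:ℝ) ≤ 1 / ((WL (n^2)).card : ℝ)
      positivity
    rw [ge_iff_le]
    calc Real.exp (β * ((n:ℝ)^2 - 2*n)) / ((WL (n^2)).card : ℝ)
        = Real.exp (β * ((n:ℝ)^2 - 2*n)) * (1 / ((WL (n^2)).card : ℝ)) := by ring
      _ ≤ Real.exp (β * (T:ℝ)) * (1 / ((WL (n^2)).card : ℝ)) := by
          apply mul_le_mul_of_nonneg_right hexp
          positivity
      _ = Real.exp (β * (T:ℝ)) * pweight Model.u (n^2) (zig n) := rfl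
      _ ≤ Z Model.u (n^2) β := hterm
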